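/- Let 0 < p < ∞ and N ≥ 1, and let f_N = Σ_{j=0}^{N-1} h_{j,0}. Then 2^{N/p}·‖Δ²_{2^{-N}} f_N‖_{L^p(ℝ)} ≥ N, where Δ²_δ g(x) = g(x+2δ) - 2g(x+δ) + g(x). -/

import Mathlib

open MeasureTheory Real

/-- The Haar mother function `h = 𝟙_{[0,1/2)} - 𝟙_{[1/2,1)}`. -/
noncomputable def haar (x : ℝ) : ℝ :=
  if 0 ≤ x ∧ x < 1/2 then 1 else if 1/2 ≤ x ∧ x < 1 then -1 else 0

lemma haar_of_neg {x : ℝ} (hx : x < 0) : haar x = 0 := by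
  unfold haar
  split_ifs with h1 h2
  · linarith [h1.1]
  · linarith [h2.1]
  · rfl

lemma haar_of_ge_one {x : ℝ} (hx : 1 ≤ x) : haar x = 0 := by
  unfold haar
  split_ifs with h1 h2
  · linarith [h1.2]
  · linarith [h2.2]
  · rfl

lemma haar_of_mem {x : ℝ} (h0 : 0 ≤ x) (h1 : x < 1/2) : haar x = 1 := by
  unfold haar
  rw [if_pos ⟨h0, h1⟩]

lemma abs_haar_le (x : ℝ) : |haar x| ≤ 1 := by
  unfold haar
  split_ifs <;> norm_num

lemma measurable_haar : Measurable haar := by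
  unfold haar
  refine Measurable.ite ?_ measurable_const
    (Measurable.ite ?_ measurable_const measurable_const)
  · exact measurableSet_Ico (a := (0:ℝ)) (b := 1/2)
  · exact measurableSet_Ico (a := (1/2:ℝ)) (b := 1)

/-- For `f_N = Σ_{j<N} h_{j,0}` one has `2^{N/p} ‖Δ²_{2^{-N}} f_N‖_p ≥ N`. -/
theorem second_difference_lower_bound (p : ℝ) (hp : 0 < p) (N : ℕ) (hN : 1 ≤ N) :
    (N : ℝ) ≤ 2 ^ ((N:ℝ)/p) *
      (∫ x : ℝ,
        |(∑ j ∈ Finset.range N, haar (2 ^ j * (x + 2 * 2 ^ (-(N:ℝ)))))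
          - 2 * (∑ j ∈ Finset.range N, haar (2 ^ j * (x + 2 ^ (-(N:ℝ)))))
          + ∑ j ∈ Finset.range N, haar (2 ^ j * x)| ^ p) ^ (1/p) := by
  set δ : ℝ := 2 ^ (-(N:ℝ)) with hδdef
  have hδpos : 0 < δ := Real.rpow_pos_of_pos two_pos _
  have hN1 : (1:ℝ) ≤ (N:ℝ) := by exact_mod_cast hN
  have hδle : 2 * δ ≤ 1 := by
    have h1 : δ ≤ 2 ^ (-1:ℝ) :=
      Real.rpow_le_rpow_of_exponent_le one_le_two (by linarith)
    rw [Real.rpow_neg_one] at h1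
    norm_num at h1
    linarith
  set g : ℝ → ℝ := fun x =>
    (∑ j ∈ Finset.range N, haar (2 ^ j * (x + 2 * δ)))
      - 2 * (∑ j ∈ Finset.range N, haar (2 ^ j * (x + δ)))
      + ∑ j ∈ Finset.range N, haar (2 ^ j * x) with hg
  show (N : ℝ) ≤ 2 ^ ((N:ℝ)/p) * (∫ x : ℝ, |g x| ^ p) ^ (1/p)
  have hjδ : ∀ j ∈ Finset.range N, (2:ℝ) ^ j * δ ≤ 1/2 := by
    intro j hj
    have hj' : (j:ℝ) + 1 ≤ (N:ℝ) := by exact_mod_cast Finset.mem_range.1 hj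
    have he : (2:ℝ) ^ j * δ = 2 ^ ((j:ℝ) - (N:ℝ)) := by
      rw [hδdef, ← Real.rpow_natCast 2 j, ← Real.rpow_add two_pos]
      ring_nf
    rw [he]
    have : (2:ℝ) ^ ((j:ℝ) - (N:ℝ)) ≤ 2 ^ (-1:ℝ) :=
      Real.rpow_le_rpow_of_exponent_le one_le_two (by linarith)
    rw [Real.rpow_neg_one] at this
    norm_num at this
    linarith
  -- value on the key interval
  have hgI : ∀ x ∈ Set.Ico (-(2*δ)) (-δ), g x = N := by
    intro x hx
    obtain ⟨hx1, hx2⟩ := hx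
    have s1 : ∑ j ∈ Finset.range N, haar ((2:ℝ) ^ j * (x + 2*δ)) = N := by
      rw [Finset.sum_congr rfl (fun j hj => ?_), Finset.sum_const,
        Finset.card_range, nsmul_eq_mul, mul_one]
      apply haar_of_mem
      · exact mul_nonneg (pow_nonneg (by norm_num) _) (by linarith)
      · have hxd : x + 2*δ < δ := by linarith
        have hpow : (0:ℝ) < 2 ^ j := pow_pos (by norm_num) _
        calc (2:ℝ) ^ j * (x + 2*δ) < 2 ^ j * δ := by
              exact mul_lt_mul_of_pos_left hxd hpow
          _ ≤ 1/2 := hjδ j hj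
    have s2 : ∑ j ∈ Finset.range N, haar ((2:ℝ) ^ j * (x + δ)) = 0 := by
      refine Finset.sum_eq_zero fun j _ => haar_of_neg ?_
      have : x + δ < 0 := by linarith
      have hpow : (0:ℝ) < 2 ^ j := pow_pos (by norm_num) _
      exact mul_neg_of_pos_of_neg hpow this
    have s3 : ∑ j ∈ Finset.range N, haar ((2:ℝ) ^ j * x) = 0 := by
      refine Finset.sum_eq_zero fun j _ => haar_of_neg ?_
      have : x < 0 := by linarith
      have hpow : (0:ℝ) < 2 ^ j := pow_pos (by norm_num) _
      exact mul_neg_of_pos_of_neg hpow this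
    simp only [hg, s1, s2, s3]
    ring
  -- support
  have hsupp : ∀ x : ℝ, x ∉ Set.Icc (-1:ℝ) 1 → g x = 0 := by
    intro x hx
    rw [Set.mem_Icc, not_and_or] at hx
    have hone : ∀ (a : ℝ), 0 ≤ a → a ≤ 1 →
        ∑ j ∈ Finset.range N, haar ((2:ℝ) ^ j * (x + a)) = 0 := by
      intro a ha0 ha1
      refine Finset.sum_eq_zero fun j _ => ?_
      rcases hx with hx | hx
      · push_neg at hx
        apply haar_of_neg
        have : x + a < 0 := by linarith
        exact mul_neg_of_pos_of_neg (pow_pos (by norm_num) _) this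
      · push_neg at hx
        apply haar_of_ge_one
        have h2j : (1:ℝ) ≤ 2 ^ j := one_le_pow₀ (by norm_num)
        have hxa : (1:ℝ) ≤ x + a := by linarith
        calc (1:ℝ) = 1 * 1 := by ring
          _ ≤ 2 ^ j * (x + a) := by
              exact mul_le_mul h2j hxa (by norm_num) (by positivity)
    have e1 := hone (2*δ) (by linarith) (by linarith)
    have e2 := hone δ (by linarith) (by linarith)
    have e3 := hone 0 le_rfl (by norm_num)
    simp only [add_zero] at e3
    simp only [hg, e1, e2, e3]
    ring
  -- global bound
  have hgbound : ∀ x : ℝ, |g x| ≤ 4 * N := by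
    intro x
    have bnd : ∀ (u : ℕ → ℝ), |∑ j ∈ Finset.range N, haar (u j)| ≤ N := by
      intro u
      calc |∑ j ∈ Finset.range N, haar (u j)|
          ≤ ∑ j ∈ Finset.range N, |haar (u j)| := Finset.abs_sum_le_sum_abs _ _
        _ ≤ ∑ _j ∈ Finset.range N, (1:ℝ) :=
            Finset.sum_le_sum fun j _ => abs_haar_le _
        _ = N := by simp
    have h1 := bnd (fun j => (2:ℝ) ^ j * (x + 2*δ))
    have h2 := bnd (fun j => (2:ℝ) ^ j * (x + δ))
    have h3 := bnd (fun j => (2:ℝ) ^ j * x)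
    simp only [hg]
    set A := ∑ j ∈ Finset.range N, haar ((2:ℝ) ^ j * (x + 2*δ))
    set B := ∑ j ∈ Finset.range N, haar ((2:ℝ) ^ j * (x + δ))
    set C := ∑ j ∈ Finset.range N, haar ((2:ℝ) ^ j * x)
    have habs : |A - 2*B + C| ≤ |A| + 2*|B| + |C| := by
      have t1 : |A - 2*B + C| ≤ |A - 2*B| + |C| := abs_add_le _ _
      have t2 : |A - 2*B| ≤ |A| + |2*B| := abs_sub _ _
      rw [abs_mul] at t2
      simp only [abs_two] at t2
      linarith
    simp only [A, B, C] at h1 h2 h3 ⊢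
    linarith
  -- measurability
  have hgm : Measurable g := by
    apply Measurable.add
    apply Measurable.sub
    · exact Finset.measurable_sum _ fun j _ =>
        measurable_haar.comp ((measurable_id.add_const _).const_mul _)
    · exact (Finset.measurable_sum _ fun j _ =>
        measurable_haar.comp ((measurable_id.add_const _).const_mul _)).const_mul 2
    · exact Finset.measurable_sum _ fun j _ =>
        measurable_haar.comp (measurable_id.const_mul _)
  have hFm : Measurable fun x => |g x| ^ p := hgm.abs.pow measurable_const
  -- integrability of |g|^p
  have hFint : Integrable (fun x => |g x| ^ p) := by
    apply Integrable.mono'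
      (g := Set.indicator (Set.Icc (-1:ℝ) 1) (fun _ => ((4*N:ℝ)) ^ p))
    · exact (integrable_indicator_iff measurableSet_Icc).2
        (integrableOn_const measure_Icc_lt_top.ne)
    · exact hFm.aestronglyMeasurable
    · filter_upwards with x
      rw [Real.norm_eq_abs, abs_of_nonneg (Real.rpow_nonneg (abs_nonneg _) p)]
      by_cases hx : x ∈ Set.Icc (-1:ℝ) 1
      · rw [Set.indicator_of_mem hx]
        exact Real.rpow_le_rpow (abs_nonneg _) (hgbound x) hp.le
      · rw [Set.indicator_of_notMem hx, hsupp x hx, abs_zero,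
          Real.zero_rpow hp.ne']
  -- set integral
  have hvol : (volume (Set.Ico (-(2*δ)) (-δ))).toReal = δ := by
    rw [Real.volume_Ico, ENNReal.toReal_ofReal (by linarith)]
    ring_nf
  have hset : ∫ x in Set.Ico (-(2*δ)) (-δ), |g x| ^ p = (N:ℝ) ^ p * δ := by
    rw [setIntegral_congr_fun measurableSet_Ico
      (g := fun _ => (N:ℝ) ^ p) (fun x hx => by
        rw [hgI x hx, abs_of_nonneg (by positivity)]),
      setIntegral_const, measureReal_def, hvol, smul_eq_mul, mul_comm]
  have hle : (N:ℝ) ^ p * δ ≤ ∫ x : ℝ, |g x| ^ p := by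
    rw [← hset]
    exact setIntegral_le_integral hFint
      (Filter.Eventually.of_forall fun x => Real.rpow_nonneg (abs_nonneg _) p)
  -- conclude
  have h1p : (0:ℝ) < 1/p := by positivity
  have hmono : ((N:ℝ) ^ p * δ) ^ (1/p) ≤ (∫ x : ℝ, |g x| ^ p) ^ (1/p) :=
    Real.rpow_le_rpow (by positivity) hle h1p.le
  have heq : ((N:ℝ) ^ p * δ) ^ (1/p) = (N:ℝ) * 2 ^ (-(N:ℝ) * (1/p)) := by
    rw [Real.mul_rpow (by positivity) hδpos.le,
      ← Real.rpow_mul (by positivity : (0:ℝ) ≤ (N:ℝ)),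
      mul_one_div_cancel hp.ne', Real.rpow_one, hδdef,
      ← Real.rpow_mul (by norm_num : (0:ℝ) ≤ 2)]
  rw [heq] at hmono
  calc (N:ℝ) = 2 ^ ((N:ℝ)/p) * ((N:ℝ) * 2 ^ (-(N:ℝ) * (1/p))) := by
        rw [mul_comm ((2:ℝ) ^ ((N:ℝ)/p)) _, mul_assoc, ← Real.rpow_add two_pos,
          show -(N:ℝ) * (1/p) + (N:ℝ)/p = 0 by ring, Real.rpow_zero, mul_one]
    _ ≤ 2 ^ ((N:ℝ)/p) * (∫ x : ℝ, |g x| ^ p) ^ (1/p) :=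
        mul_le_mul_of_nonneg_left hmono (Real.rpow_nonneg (by norm_num) _)
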